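/- Let L ≥ 1 be a real number and let (σ_{k,k'})_{k,k'∈ℤ} be complex numbers such that S_L := sup_{k,k'∈ℤ, |k−k'|<L} |σ_{k,k'}| < ∞ and D_L := (Σ_{k,k'∈ℤ, |k−k'|≥L} |σ_{k,k'}|²)^{1/2} < ∞. Then for all a, d ∈ ℓ²(ℤ), Σ_{k,k'∈ℤ} |σ_{k,k'}| |a_{k'}| |d_k| ≤ (3L·S_L + D_L) ‖a‖_{ℓ²(ℤ)} ‖d‖_{ℓ²(ℤ)}. In particular, the operator Λ on ℓ²(ℤ) with kernel (σ_{k,k'}) is bounded with ‖Λ‖_{ℓ²→ℓ²} ≤ 3L·S_L + D_L. -/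

import Mathlib

open scoped ENNReal Classical
open MeasureTheory

lemma tsum_cauchy_schwarz {ι : Type*} [Countable ι] [MeasurableSpace ι]
    [MeasurableSingletonClass ι] (f g : ι → ℝ≥0∞) :
    ∑' i, f i * g i ≤ (∑' i, f i ^ 2) ^ (1/2 : ℝ) * (∑' i, g i ^ 2) ^ (1/2 : ℝ) := by
  have hpq : Real.HolderConjugate 2 2 := Real.HolderConjugate.two_two
  have h := ENNReal.lintegral_mul_le_Lp_mul_Lq (Measure.count : Measure ι) hpq
    (measurable_of_countable f).aemeasurable (measurable_of_countable g).aemeasurable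
  rw [lintegral_count, lintegral_count, lintegral_count] at h
  have e : ∀ (h : ι → ℝ≥0∞) (i : ι), h i ^ (2:ℝ) = h i ^ 2 := fun h i => by
    rw [← ENNReal.rpow_natCast (h i) 2]; norm_num
  simp only [e] at h
  convert h using 2
  rfl

lemma count_band (L : ℝ) (hL : 1 ≤ L) (m : ℤ) :
    ∑' n : ℤ, (if |((m - n : ℤ) : ℝ)| < L then (1:ℝ≥0∞) else 0) ≤ ENNReal.ofReal (3*L) := by
  classical
  set s : Finset ℤ := Finset.Icc (m - (⌈L⌉ - 1)) (m + (⌈L⌉ - 1)) with hs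
  have hsupp : ∀ n ∉ s, (if |((m - n : ℤ) : ℝ)| < L then (1:ℝ≥0∞) else 0) = 0 := by
    intro n hn
    rw [if_neg]
    intro habs
    apply hn
    have h1 : |m - n| < ⌈L⌉ := by
      rw [Int.lt_ceil]
      rwa [Int.cast_abs]
    rw [abs_lt] at h1
    simp only [hs, Finset.mem_Icc]
    omega
  rw [tsum_eq_sum hsupp]
  have hcard : (s.card : ℝ) ≤ 3 * L := by
    have h1 : (⌈L⌉ : ℝ) < L + 1 := Int.ceil_lt_add_one L
    have h2 : (1:ℤ) ≤ ⌈L⌉ := by exact_mod_cast Int.one_le_ceil_iff.mpr (by linarith)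
    have : s.card = (2 * ⌈L⌉ - 1).toNat := by
      rw [hs, Int.card_Icc]
      congr 1
      ring
    rw [this]
    have h4 : (0:ℤ) ≤ 2 * ⌈L⌉ - 1 := by omega
    have h5 : (((2 * ⌈L⌉ - 1).toNat : ℤ) : ℝ) = ((2 * ⌈L⌉ - 1 : ℤ) : ℝ) := by
      exact_mod_cast congrArg (Int.cast : ℤ → ℝ) (Int.toNat_of_nonneg h4)
    rw [show (((2 * ⌈L⌉ - 1).toNat : ℕ) : ℝ) = (((2 * ⌈L⌉ - 1).toNat : ℤ) : ℝ) by push_cast; ring, h5]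
    push_cast
    linarith
  calc ∑ n ∈ s, (if |((m - n : ℤ) : ℝ)| < L then (1:ℝ≥0∞) else 0)
      ≤ ∑ n ∈ s, (1:ℝ≥0∞) := Finset.sum_le_sum (fun n _ => by split_ifs <;> simp)
    _ = (s.card : ℝ≥0∞) := by simp
    _ ≤ ENNReal.ofReal (3*L) := by
        rw [← ENNReal.ofReal_natCast]
        exact ENNReal.ofReal_le_ofReal hcard

lemma count_band' (L : ℝ) (hL : 1 ≤ L) (m : ℤ) :
    ∑' n : ℤ, (if |((n - m : ℤ) : ℝ)| < L then (1:ℝ≥0∞) else 0) ≤ ENNReal.ofReal (3*L) := by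
  have h : ∀ n : ℤ, |((n - m : ℤ) : ℝ)| = |((m - n : ℤ) : ℝ)| := by
    intro n; push_cast; rw [abs_sub_comm]
  simp only [h]
  exact count_band L hL m

lemma sqrt_half (x : ℝ≥0∞) : (x ^ 2) ^ (1/2 : ℝ) = x := by
  rw [← ENNReal.rpow_natCast x 2, ← ENNReal.rpow_mul]
  norm_num

theorem stmt8 (L : ℝ) (hL : 1 ≤ L) (σ : ℤ → ℤ → ℂ) (S D : ℝ) (hD0 : 0 ≤ D)
    (hS : ∀ k k' : ℤ, |((k - k' : ℤ) : ℝ)| < L → ‖σ k k'‖ ≤ S)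
    (hDsum : Summable (fun p : ℤ × ℤ =>
      if L ≤ |((p.1 - p.2 : ℤ) : ℝ)| then ‖σ p.1 p.2‖ ^ 2 else 0))
    (hD : (∑' p : ℤ × ℤ, if L ≤ |((p.1 - p.2 : ℤ) : ℝ)| then ‖σ p.1 p.2‖ ^ 2 else 0)
      ≤ D ^ 2)
    (a d : ℤ → ℂ)
    (ha : Summable (fun k => ‖a k‖ ^ 2)) (hd : Summable (fun k => ‖d k‖ ^ 2)) :
    (∑' p : ℤ × ℤ, ENNReal.ofReal (‖σ p.1 p.2‖ * ‖a p.2‖ * ‖d p.1‖)) ≤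
      ENNReal.ofReal ((3 * L * S + D) * Real.sqrt (∑' k, ‖a k‖ ^ 2) *
        Real.sqrt (∑' k, ‖d k‖ ^ 2)) := by
  classical
  have hS0 : 0 ≤ S := le_trans (norm_nonneg (σ 0 0)) (hS 0 0 (by simpa using lt_of_lt_of_le one_pos hL))
  have hL0 : (0:ℝ) < L := lt_of_lt_of_le one_pos hL
  set α : ℤ → ℝ≥0∞ := fun k => ENNReal.ofReal ‖a k‖ with hα
  set δ : ℤ → ℝ≥0∞ := fun k => ENNReal.ofReal ‖d k‖ with hδ
  set s : ℤ × ℤ → ℝ≥0∞ := fun p => ENNReal.ofReal ‖σ p.1 p.2‖ with hsdef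
  set EA : ℝ≥0∞ := ∑' k, α k ^ 2 with hEAdef
  set ED : ℝ≥0∞ := ∑' k, δ k ^ 2 with hEDdef
  have hEA : EA = ENNReal.ofReal (∑' k, ‖a k‖ ^ 2) := by
    rw [ENNReal.ofReal_tsum_of_nonneg (fun k => sq_nonneg _) ha, hEAdef]
    congr 1; funext k; rw [hα, ENNReal.ofReal_pow (norm_nonneg _)]
  have hED : ED = ENNReal.ofReal (∑' k, ‖d k‖ ^ 2) := by
    rw [ENNReal.ofReal_tsum_of_nonneg (fun k => sq_nonneg _) hd, hEDdef]
    congr 1; funext k; rw [hδ, ENNReal.ofReal_pow (norm_nonneg _)]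
  -- split into band and off-band
  have hpt : ∀ p : ℤ × ℤ, ENNReal.ofReal (‖σ p.1 p.2‖ * ‖a p.2‖ * ‖d p.1‖) =
      (if |((p.1 - p.2 : ℤ) : ℝ)| < L then s p * α p.2 * δ p.1 else 0) +
      (if L ≤ |((p.1 - p.2 : ℤ) : ℝ)| then s p * α p.2 * δ p.1 else 0) := by
    intro p
    have he : ENNReal.ofReal (‖σ p.1 p.2‖ * ‖a p.2‖ * ‖d p.1‖) = s p * α p.2 * δ p.1 := by
      rw [ENNReal.ofReal_mul (mul_nonneg (norm_nonneg _) (norm_nonneg _)),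
        ENNReal.ofReal_mul (norm_nonneg _)]
    by_cases h : |((p.1 - p.2 : ℤ) : ℝ)| < L
    · rw [if_pos h, if_neg (not_le.mpr h), add_zero, he]
    · rw [if_neg h, if_pos (not_lt.mp h), zero_add, he]
  rw [tsum_congr hpt, ENNReal.tsum_add]
  -- the band part
  set T : ℤ → ℝ≥0∞ := fun k => ∑' k', if |((k - k' : ℤ) : ℝ)| < L then α k' else 0 with hT
  set U : ℤ → ℝ≥0∞ := fun k => ∑' k', if |((k - k' : ℤ) : ℝ)| < L then α k' ^ 2 else 0 with hU
  have band1 : (∑' p : ℤ × ℤ, if |((p.1 - p.2 : ℤ) : ℝ)| < L then s p * α p.2 * δ p.1 else 0)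
      ≤ ENNReal.ofReal S * ∑' k, δ k * T k := by
    rw [ENNReal.tsum_prod']
    rw [← ENNReal.tsum_mul_left]
    apply ENNReal.tsum_le_tsum
    intro k
    rw [hT]
    simp only
    rw [← ENNReal.tsum_mul_left, ← ENNReal.tsum_mul_left]
    apply ENNReal.tsum_le_tsum
    intro k'
    by_cases h : |((k - k' : ℤ) : ℝ)| < L
    · rw [if_pos h, if_pos h]
      have : s (k, k') ≤ ENNReal.ofReal S := ENNReal.ofReal_le_ofReal (hS k k' h)
      calc s (k, k') * α k' * δ k ≤ ENNReal.ofReal S * α k' * δ k := by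
            exact mul_le_mul' (mul_le_mul' this le_rfl) le_rfl
        _ = ENNReal.ofReal S * (δ k * α k') := by ring
    · rw [if_neg h, if_neg h]
      simp
  have bandCS : (∑' k, δ k * T k) ≤ ED ^ (1/2:ℝ) * (∑' k, T k ^ 2) ^ (1/2:ℝ) :=
    tsum_cauchy_schwarz δ T
  have hTle : ∀ k, T k ≤ ENNReal.ofReal (3*L) ^ (1/2:ℝ) * U k ^ (1/2:ℝ) := by
    intro k
    have h1 : T k = ∑' k', ((if |((k - k' : ℤ) : ℝ)| < L then (1:ℝ≥0∞) else 0) *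
        (if |((k - k' : ℤ) : ℝ)| < L then α k' else 0)) :=
      tsum_congr fun k' => by split_ifs <;> simp
    rw [h1]
    refine le_trans (tsum_cauchy_schwarz _ _) ?_
    have h2 : ∀ k' : ℤ, (if |((k - k' : ℤ) : ℝ)| < L then (1:ℝ≥0∞) else 0) ^ 2 =
        (if |((k - k' : ℤ) : ℝ)| < L then (1:ℝ≥0∞) else 0) := by
      intro k'; split_ifs <;> simp
    have h3 : ∀ k' : ℤ, (if |((k - k' : ℤ) : ℝ)| < L then α k' else 0) ^ 2 =
        (if |((k - k' : ℤ) : ℝ)| < L then α k' ^ 2 else 0) := by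
      intro k'; split_ifs <;> simp
    simp only [h2, h3]
    exact mul_le_mul' (ENNReal.rpow_le_rpow (count_band L hL k) (by norm_num)) le_rfl
  have hT2le : ∀ k, T k ^ 2 ≤ ENNReal.ofReal (3*L) * U k := by
    intro k
    calc T k ^ 2 ≤ (ENNReal.ofReal (3*L) ^ (1/2:ℝ) * U k ^ (1/2:ℝ)) ^ 2 := by
          gcongr; exact hTle k
      _ = ENNReal.ofReal (3*L) * U k := by
          rw [mul_pow, ← ENNReal.rpow_natCast (ENNReal.ofReal (3*L) ^ (1/2:ℝ)) 2,
            ← ENNReal.rpow_natCast (U k ^ (1/2:ℝ)) 2, ← ENNReal.rpow_mul, ← ENNReal.rpow_mul]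
          norm_num
  have hUsum : (∑' k, U k) ≤ ENNReal.ofReal (3*L) * EA := by
    rw [hU]
    simp only
    rw [ENNReal.tsum_comm]
    calc (∑' k' : ℤ, ∑' k : ℤ, if |((k - k' : ℤ) : ℝ)| < L then α k' ^ 2 else 0)
        = ∑' k' : ℤ, α k' ^ 2 * ∑' k : ℤ, (if |((k - k' : ℤ) : ℝ)| < L then (1:ℝ≥0∞) else 0) := by
          refine tsum_congr fun k' => ?_
          rw [← ENNReal.tsum_mul_left]
          exact tsum_congr fun k => by split_ifs <;> simp
      _ ≤ ∑' k' : ℤ, α k' ^ 2 * ENNReal.ofReal (3*L) := by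
          gcongr with k'
          exact count_band' L hL k'
      _ = ENNReal.ofReal (3*L) * EA := by
          rw [ENNReal.tsum_mul_right, hEAdef, mul_comm]
  have hTsum : (∑' k, T k ^ 2) ^ (1/2:ℝ) ≤ ENNReal.ofReal (3*L) * EA ^ (1/2:ℝ) := by
    calc (∑' k, T k ^ 2) ^ (1/2:ℝ)
        ≤ (ENNReal.ofReal (3*L) * (ENNReal.ofReal (3*L) * EA)) ^ (1/2:ℝ) := by
          gcongr
          refine le_trans (ENNReal.tsum_le_tsum hT2le) ?_
          rw [ENNReal.tsum_mul_left]
          exact mul_le_mul' le_rfl hUsum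
      _ = ENNReal.ofReal (3*L) * EA ^ (1/2:ℝ) := by
          rw [← mul_assoc, ← sq, ENNReal.mul_rpow_of_nonneg _ _ (by norm_num : (0:ℝ) ≤ 1/2),
            sqrt_half]
  have band : (∑' p : ℤ × ℤ, if |((p.1 - p.2 : ℤ) : ℝ)| < L then s p * α p.2 * δ p.1 else 0)
      ≤ ENNReal.ofReal (3 * L * S) * (EA ^ (1/2:ℝ) * ED ^ (1/2:ℝ)) := by
    refine le_trans band1 ?_
    calc ENNReal.ofReal S * ∑' k, δ k * T k
        ≤ ENNReal.ofReal S * (ED ^ (1/2:ℝ) * (ENNReal.ofReal (3*L) * EA ^ (1/2:ℝ))) := by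
          gcongr
          exact le_trans bandCS (by gcongr)
      _ = ENNReal.ofReal (3 * L * S) * (EA ^ (1/2:ℝ) * ED ^ (1/2:ℝ)) := by
          rw [show (3 * L * S) = S * (3 * L) by ring,
            ENNReal.ofReal_mul hS0]
          ring
  -- the off-band part
  have off : (∑' p : ℤ × ℤ, if L ≤ |((p.1 - p.2 : ℤ) : ℝ)| then s p * α p.2 * δ p.1 else 0)
      ≤ ENNReal.ofReal D * (EA ^ (1/2:ℝ) * ED ^ (1/2:ℝ)) := by
    have h1 : ∀ p : ℤ × ℤ, (if L ≤ |((p.1 - p.2 : ℤ) : ℝ)| then s p * α p.2 * δ p.1 else 0) =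
        (if L ≤ |((p.1 - p.2 : ℤ) : ℝ)| then s p else 0) * (α p.2 * δ p.1) := by
      intro p; split_ifs with h
      · ring
      · simp
    rw [tsum_congr h1]
    refine le_trans (tsum_cauchy_schwarz _ _) ?_
    have hF : (∑' p : ℤ × ℤ, (if L ≤ |((p.1 - p.2 : ℤ) : ℝ)| then s p else 0) ^ 2)
        ≤ ENNReal.ofReal D ^ 2 := by
      have e1 : ∀ p : ℤ × ℤ, (if L ≤ |((p.1 - p.2 : ℤ) : ℝ)| then s p else 0) ^ 2 =
          ENNReal.ofReal (if L ≤ |((p.1 - p.2 : ℤ) : ℝ)| then ‖σ p.1 p.2‖ ^ 2 else 0) := by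
        intro p; split_ifs with h
        · rw [hsdef]; simp only; rw [ENNReal.ofReal_pow (norm_nonneg _)]
        · simp
      rw [tsum_congr e1, ← ENNReal.ofReal_tsum_of_nonneg (fun p => by positivity) hDsum,
        ← ENNReal.ofReal_pow hD0]
      exact ENNReal.ofReal_le_ofReal hD
    have hG : (∑' p : ℤ × ℤ, (α p.2 * δ p.1) ^ 2) = EA * ED := by
      have e2 : ∀ p : ℤ × ℤ, (α p.2 * δ p.1) ^ 2 = δ p.1 ^ 2 * α p.2 ^ 2 := fun p => by ring
      rw [tsum_congr e2, ENNReal.tsum_prod']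
      calc (∑' k : ℤ, ∑' k' : ℤ, δ k ^ 2 * α k' ^ 2)
          = ∑' k : ℤ, δ k ^ 2 * EA := by
            refine tsum_congr fun k => ?_
            rw [ENNReal.tsum_mul_left, hEAdef]
        _ = EA * ED := by rw [ENNReal.tsum_mul_right, hEDdef, mul_comm]
    calc (∑' p : ℤ × ℤ, (if L ≤ |((p.1 - p.2 : ℤ) : ℝ)| then s p else 0) ^ 2) ^ (1/2:ℝ) *
          (∑' p : ℤ × ℤ, (α p.2 * δ p.1) ^ 2) ^ (1/2:ℝ)
        ≤ (ENNReal.ofReal D ^ 2) ^ (1/2:ℝ) * (EA * ED) ^ (1/2:ℝ) :=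
          mul_le_mul' (ENNReal.rpow_le_rpow hF (by norm_num))
            (ENNReal.rpow_le_rpow (le_of_eq hG) (by norm_num))
      _ = ENNReal.ofReal D * (EA ^ (1/2:ℝ) * ED ^ (1/2:ℝ)) := by
          rw [sqrt_half, ENNReal.mul_rpow_of_nonneg _ _ (by norm_num : (0:ℝ) ≤ 1/2)]
  -- combine
  refine le_trans (add_le_add band off) ?_
  rw [← add_mul]
  have hA0 : (0:ℝ) ≤ ∑' k, ‖a k‖ ^ 2 := tsum_nonneg (fun k => sq_nonneg _)
  have hD0' : (0:ℝ) ≤ ∑' k, ‖d k‖ ^ 2 := tsum_nonneg (fun k => sq_nonneg _)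
  have hEAhalf : EA ^ (1/2:ℝ) = ENNReal.ofReal (Real.sqrt (∑' k, ‖a k‖ ^ 2)) := by
    rw [hEA, Real.sqrt_eq_rpow, ← ENNReal.ofReal_rpow_of_nonneg hA0 (by norm_num)]
  have hEDhalf : ED ^ (1/2:ℝ) = ENNReal.ofReal (Real.sqrt (∑' k, ‖d k‖ ^ 2)) := by
    rw [hED, Real.sqrt_eq_rpow, ← ENNReal.ofReal_rpow_of_nonneg hD0' (by norm_num)]
  rw [hEAhalf, hEDhalf, ← ENNReal.ofReal_add (by positivity) hD0,
    ← ENNReal.ofReal_mul (Real.sqrt_nonneg _), ← ENNReal.ofReal_mul (by positivity),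
    mul_assoc]
  exact le_of_eq (by congr 1; ring)
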